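/- Let g3(n)=α1 n+α0, g2(n)=β1 n+β0, g1(n)=γ1 n+γ0 be real polynomials of degree at most 1 with g3(n) > 0, g2(n) < 0 and g1(n) > 0 for all integers n ≥ 0 (signature (−,+)), and set b_n = g2(n)/g3(n), a_n = g1(n)/g3(n). Suppose the convergents f_n of K(a_n/b_n) converge to a finite limit μ. Let (u_n)_{n≥-1} be a solution of g3(n)u_n = g2(n)u_{n-1} + g1(n)u_{n-2} (n ≥ 1) with u_{-1} > 0 and u_0 > 0. Then the following are equivalent: (1) u_n ≥ 0 for all n ≥ −1; (2) (u_n) is a minimal solution of this recurrence; (3) −u_0/u_{-1} = μ. -/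

import Mathlib

open Filter

/-- `u` solves the second-order recurrence `p n * u n = q n * u (n-1) + r n * u (n-2)`
for all `n ≥ 1`. -/
def IsSol (p q r u : ℤ → ℝ) : Prop :=
  ∀ n : ℤ, 1 ≤ n → p n * u n = q n * u (n - 1) + r n * u (n - 2)

/-- A sequence (indexed from `-1`) is nontrivial if it is not identically zero. -/
def SeqNontrivial (u : ℤ → ℝ) : Prop :=
  ∃ n : ℤ, -1 ≤ n ∧ u n ≠ 0

/-- Linear independence of two sequences indexed from `-1`. -/
def SeqLinIndep (u v : ℤ → ℝ) : Prop :=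
  ∀ c d : ℝ, (∀ n : ℤ, -1 ≤ n → c * u n + d * v n = 0) → c = 0 ∧ d = 0

/-- A nontrivial solution `u` of the recurrence is minimal if there is another solution `v`,
linearly independent from `u`, with `u n / v n → 0`. -/
def IsMinimal (p q r u : ℤ → ℝ) : Prop :=
  IsSol p q r u ∧ SeqNontrivial u ∧
    ∃ v : ℤ → ℝ, IsSol p q r v ∧ SeqLinIndep u v ∧
      Tendsto (fun n : ℕ => u (n : ℤ) / v (n : ℤ)) atTop (nhds 0)

/-- For a degree-at-most-1 recurrence `g3(n) u n = g2(n) u (n-1) + g1(n) u (n-2)`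
with signature `(−,+)` (`g3 > 0`, `g2 < 0`, `g1 > 0` on `n ≥ 0`), with
`b n = g2 n / g3 n`, `a n = g1 n / g3 n`, and convergents `f n = A n / B n` of `K(a_n/b_n)`
converging to a finite limit `μ`: for any solution `u` with `u (-1) > 0` and `u 0 > 0`, the
following are equivalent: `u` is positive; `u` is a minimal solution; `-u 0 / u (-1) = μ`. -/
theorem twoStepInd (P : ℤ → Prop) (h1 : P (-1)) (h0 : P 0)
    (hstep : ∀ n : ℤ, 1 ≤ n → P (n - 2) → P (n - 1) → P n) :
    ∀ n : ℤ, -1 ≤ n → P n := by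
  have key : ∀ k : ℕ, P ((k : ℤ) - 1) ∧ P (k : ℤ) := by
    intro k
    induction k with
    | zero => exact ⟨by norm_num [h1], h0⟩
    | succ k ih =>
      have e1 : ((k + 1 : ℕ) : ℤ) - 1 = (k : ℤ) := by push_cast; ring
      have e2 : ((k + 1 : ℕ) : ℤ) - 2 = (k : ℤ) - 1 := by push_cast; ring
      refine ⟨by rw [e1]; exact ih.2, ?_⟩
      exact hstep _ (by exact_mod_cast Nat.succ_le_succ (Nat.zero_le k)) (by rw [e2]; exact ih.1)
        (by rw [e1]; exact ih.2)
  intro n hn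
  have hn' : n = ((n + 1).toNat : ℤ) - 1 := by omega
  rw [hn']
  exact (key _).1

section CF
variable {a b A B : ℤ → ℝ}

theorem Bnn (ha : ∀ n : ℤ, 1 ≤ n → 0 < a n) (hb : ∀ n : ℤ, 1 ≤ n → b n < 0)
    (hB1 : B (-1) = 0) (hB0 : B 0 = 1)
    (hBrec : ∀ n : ℤ, 1 ≤ n → B n = b n * B (n - 1) + a n * B (n - 2)) :
    ∀ n : ℤ, -1 ≤ n → (Even n → 0 ≤ B n) ∧ (Odd n → B n ≤ 0) := by
  refine twoStepInd _ ⟨fun h => absurd h (by decide), fun _ => le_of_eq hB1⟩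
    ⟨fun _ => by rw [hB0]; norm_num, fun h => absurd h (by decide)⟩ ?_
  intro n hn ih2 ih1
  have hrec := hBrec n hn
  have han := ha n hn
  have hbn := hb n hn
  constructor
  · intro he
    have h1 : Odd (n - 1) := by rcases he with ⟨r, hr⟩; exact ⟨r - 1, by omega⟩
    have h2 : Even (n - 2) := by rcases he with ⟨r, hr⟩; exact ⟨r - 1, by omega⟩
    have := ih1.2 h1
    have := ih2.1 h2
    nlinarith
  · intro ho
    have h1 : Even (n - 1) := by rcases ho with ⟨r, hr⟩; exact ⟨r, by omega⟩
    have h2 : Odd (n - 2) := by rcases ho with ⟨r, hr⟩; exact ⟨r - 1, by omega⟩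
    have := ih1.1 h1
    have := ih2.2 h2
    nlinarith

theorem Bsign (ha : ∀ n : ℤ, 1 ≤ n → 0 < a n) (hb : ∀ n : ℤ, 1 ≤ n → b n < 0)
    (hB1 : B (-1) = 0) (hB0 : B 0 = 1)
    (hBrec : ∀ n : ℤ, 1 ≤ n → B n = b n * B (n - 1) + a n * B (n - 2)) :
    ∀ n : ℤ, 0 ≤ n → (Even n → 0 < B n) ∧ (Odd n → B n < 0) := by
  have hnn := Bnn ha hb hB1 hB0 hBrec
  refine Int.le_induction ?_ ?_
  · exact ⟨fun _ => by rw [hB0]; norm_num, fun h => absurd h (by decide)⟩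
  · intro n hn ih
    have h1 : (1 : ℤ) ≤ n + 1 := by omega
    have hrec := hBrec (n + 1) h1
    have han := ha _ h1
    have hbn := hb _ h1
    have e1 : n + 1 - 1 = n := by ring
    have e2 : n + 1 - 2 = n - 1 := by ring
    rw [e1, e2] at hrec
    constructor
    · intro he
      have h1' : Odd n := by rcases he with ⟨r, hr⟩; exact ⟨r - 1, by omega⟩
      have h2' : Even (n - 1) := by rcases he with ⟨r, hr⟩; exact ⟨r - 1, by omega⟩
      have := ih.2 h1'
      have := (hnn (n - 1) (by omega)).1 h2'
      nlinarith
    · intro ho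
      have h1' : Even n := by rcases ho with ⟨r, hr⟩; exact ⟨r, by omega⟩
      have h2' : Odd (n - 1) := by rcases ho with ⟨r, hr⟩; exact ⟨r - 1, by omega⟩
      have := ih.1 h1'
      have := (hnn (n - 1) (by omega)).2 h2'
      nlinarith

theorem BneZero (ha : ∀ n : ℤ, 1 ≤ n → 0 < a n) (hb : ∀ n : ℤ, 1 ≤ n → b n < 0)
    (hB1 : B (-1) = 0) (hB0 : B 0 = 1)
    (hBrec : ∀ n : ℤ, 1 ≤ n → B n = b n * B (n - 1) + a n * B (n - 2)) :
    ∀ n : ℤ, 0 ≤ n → B n ≠ 0 := by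
  intro n hn
  rcases Int.even_or_odd n with h | h
  · exact ((Bsign ha hb hB1 hB0 hBrec n hn).1 h).ne'
  · exact ((Bsign ha hb hB1 hB0 hBrec n hn).2 h).ne

theorem Dsign (ha : ∀ n : ℤ, 1 ≤ n → 0 < a n)
    (hA1 : A (-1) = 1) (hA0 : A 0 = 0)
    (hArec : ∀ n : ℤ, 1 ≤ n → A n = b n * A (n - 1) + a n * A (n - 2))
    (hB1 : B (-1) = 0) (hB0 : B 0 = 1)
    (hBrec : ∀ n : ℤ, 1 ≤ n → B n = b n * B (n - 1) + a n * B (n - 2)) :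
    ∀ n : ℤ, 0 ≤ n → (Even n → A n * B (n - 1) - A (n - 1) * B n < 0) ∧
      (Odd n → 0 < A n * B (n - 1) - A (n - 1) * B n) := by
  refine Int.le_induction ?_ ?_
  ·
    refine ⟨fun _ => ?_, fun h => absurd h (by decide)⟩
    norm_num [hA0, hA1, hB0, hB1]
  · intro n hn ih
    have h1 : (1 : ℤ) ≤ n + 1 := by omega
    have han := ha _ h1
    have hrA := hArec (n + 1) h1
    have hrB := hBrec (n + 1) h1
    have e1 : n + 1 - 1 = n := by ring
    have e2 : n + 1 - 2 = n - 1 := by ring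
    rw [e1, e2] at hrA hrB
    have key : A (n + 1) * B (n + 1 - 1) - A (n + 1 - 1) * B (n + 1) =
        -(a (n + 1)) * (A n * B (n - 1) - A (n - 1) * B n) := by
      rw [e1, hrA, hrB]; ring
    constructor
    · intro he
      have h1' : Odd n := by rcases he with ⟨r, hr⟩; exact ⟨r - 1, by omega⟩
      have := ih.2 h1'
      rw [key]; nlinarith
    · intro ho
      have h1' : Even n := by rcases ho with ⟨r, hr⟩; exact ⟨r, by omega⟩
      have := ih.1 h1'
      rw [key]; nlinarith


theorem solDecomp (hA1 : A (-1) = 1) (hA0 : A 0 = 0)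
    (hArec : ∀ n : ℤ, 1 ≤ n → A n = b n * A (n - 1) + a n * A (n - 2))
    (hB1 : B (-1) = 0) (hB0 : B 0 = 1)
    (hBrec : ∀ n : ℤ, 1 ≤ n → B n = b n * B (n - 1) + a n * B (n - 2))
    (v : ℤ → ℝ) (hv : ∀ n : ℤ, 1 ≤ n → v n = b n * v (n - 1) + a n * v (n - 2)) :
    ∀ n : ℤ, -1 ≤ n → v n = v 0 * B n + v (-1) * A n := by
  refine twoStepInd _ (by rw [hA1, hB1]; ring) (by rw [hA0, hB0]; ring) ?_
  intro n hn ih2 ih1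
  rw [hv n hn, ih1, ih2, hArec n hn, hBrec n hn]; ring

theorem fStep (ha : ∀ n : ℤ, 1 ≤ n → 0 < a n) (hb : ∀ n : ℤ, 1 ≤ n → b n < 0)
    (hA1 : A (-1) = 1) (hA0 : A 0 = 0)
    (hArec : ∀ n : ℤ, 1 ≤ n → A n = b n * A (n - 1) + a n * A (n - 2))
    (hB1 : B (-1) = 0) (hB0 : B 0 = 1)
    (hBrec : ∀ n : ℤ, 1 ≤ n → B n = b n * B (n - 1) + a n * B (n - 2)) :
    ∀ n : ℤ, 1 ≤ n → (Even n → A (n - 1) / B (n - 1) < A (n + 1) / B (n + 1)) ∧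
      (Odd n → A (n + 1) / B (n + 1) < A (n - 1) / B (n - 1)) := by
  intro n hn
  have hsB := Bsign ha hb hB1 hB0 hBrec
  have hsD := Dsign ha hA1 hA0 hArec hB1 hB0 hBrec n (by omega)
  have h1 : (1 : ℤ) ≤ n + 1 := by omega
  have hbn := hb _ h1
  have hrA := hArec (n + 1) h1
  have hrB := hBrec (n + 1) h1
  have e1 : n + 1 - 1 = n := by ring
  have e2 : n + 1 - 2 = n - 1 := by ring
  rw [e1, e2] at hrA hrB
  have cross : A (n + 1) * B (n - 1) - B (n + 1) * A (n - 1) =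
      b (n + 1) * (A n * B (n - 1) - A (n - 1) * B n) := by rw [hrA, hrB]; ring
  constructor
  · intro he
    have hodd1 : Odd (n - 1) := by rcases he with ⟨r, hr⟩; exact ⟨r - 1, by omega⟩
    have hodd2 : Odd (n + 1) := by rcases he with ⟨r, hr⟩; exact ⟨r, by omega⟩
    have hB1' := (hsB (n - 1) (by omega)).2 hodd1
    have hB2' := (hsB (n + 1) (by omega)).2 hodd2
    have hD := hsD.1 he
    rw [← sub_pos, div_sub_div _ _ hB2'.ne hB1'.ne]
    exact div_pos (by nlinarith) (by nlinarith)
  · intro ho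
    have hev1 : Even (n - 1) := by rcases ho with ⟨r, hr⟩; exact ⟨r, by omega⟩
    have hev2 : Even (n + 1) := by rcases ho with ⟨r, hr⟩; exact ⟨r + 1, by omega⟩
    have hB1' := (hsB (n - 1) (by omega)).1 hev1
    have hB2' := (hsB (n + 1) (by omega)).1 hev2
    have hD := hsD.2 ho
    rw [← sub_neg, div_sub_div _ _ hB2'.ne' hB1'.ne']
    exact div_neg_of_neg_of_pos (by nlinarith) (by nlinarith)

end CF


theorem stmt_3 (α1 α0 β1 β0 γ1 γ0 μ : ℝ) (A B u : ℤ → ℝ)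
    (hsig : ∀ n : ℤ, 0 ≤ n →
      0 < α1 * (n : ℝ) + α0 ∧ β1 * (n : ℝ) + β0 < 0 ∧ 0 < γ1 * (n : ℝ) + γ0)
    (hA1 : A (-1) = 1) (hA0 : A 0 = 0)
    (hArec : ∀ n : ℤ, 1 ≤ n →
      A n = (β1 * (n : ℝ) + β0) / (α1 * (n : ℝ) + α0) * A (n - 1) +
        (γ1 * (n : ℝ) + γ0) / (α1 * (n : ℝ) + α0) * A (n - 2))
    (hB1 : B (-1) = 0) (hB0 : B 0 = 1)
    (hBrec : ∀ n : ℤ, 1 ≤ n →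
      B n = (β1 * (n : ℝ) + β0) / (α1 * (n : ℝ) + α0) * B (n - 1) +
        (γ1 * (n : ℝ) + γ0) / (α1 * (n : ℝ) + α0) * B (n - 2))
    (hconv : Tendsto (fun n : ℕ => A (n : ℤ) / B (n : ℤ)) atTop (nhds μ))
    (hu : IsSol (fun n => α1 * (n : ℝ) + α0) (fun n => β1 * (n : ℝ) + β0)
      (fun n => γ1 * (n : ℝ) + γ0) u)
    (hum1 : 0 < u (-1)) (hu0 : 0 < u 0) :
    ((∀ n : ℤ, -1 ≤ n → 0 ≤ u n) ↔
        IsMinimal (fun n => α1 * (n : ℝ) + α0) (fun n => β1 * (n : ℝ) + β0)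
          (fun n => γ1 * (n : ℝ) + γ0) u) ∧
    (IsMinimal (fun n => α1 * (n : ℝ) + α0) (fun n => β1 * (n : ℝ) + β0)
        (fun n => γ1 * (n : ℝ) + γ0) u ↔
      -(u 0 / u (-1)) = μ) := by
  set bb : ℤ → ℝ := fun n => (β1 * (n : ℝ) + β0) / (α1 * (n : ℝ) + α0) with hbbd
  set aa : ℤ → ℝ := fun n => (γ1 * (n : ℝ) + γ0) / (α1 * (n : ℝ) + α0) with haad
  have haa : ∀ n : ℤ, 1 ≤ n → 0 < aa n := fun n hn =>
    div_pos (hsig n (by omega)).2.2 (hsig n (by omega)).1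
  have hbb : ∀ n : ℤ, 1 ≤ n → bb n < 0 := fun n hn =>
    div_neg_of_neg_of_pos (hsig n (by omega)).2.1 (hsig n (by omega)).1
  have hArec' : ∀ n : ℤ, 1 ≤ n → A n = bb n * A (n - 1) + aa n * A (n - 2) := hArec
  have hBrec' : ∀ n : ℤ, 1 ≤ n → B n = bb n * B (n - 1) + aa n * B (n - 2) := hBrec
  -- normalized recurrence for solutions of IsSol
  have normRec : ∀ w : ℤ → ℝ, IsSol (fun n => α1 * (n : ℝ) + α0) (fun n => β1 * (n : ℝ) + β0)
      (fun n => γ1 * (n : ℝ) + γ0) w →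
      ∀ n : ℤ, 1 ≤ n → w n = bb n * w (n - 1) + aa n * w (n - 2) := by
    intro w hw n hn
    have h3 := (hsig n (by omega)).1
    have hrec := hw n hn
    simp only at hrec
    have : bb n * w (n - 1) + aa n * w (n - 2) =
        ((β1 * (n : ℝ) + β0) * w (n - 1) + (γ1 * (n : ℝ) + γ0) * w (n - 2)) /
          (α1 * (n : ℝ) + α0) := by
      rw [hbbd, haad]; ring
    rw [this, eq_div_iff h3.ne']
    linarith
  have hBs := Bsign haa hbb hB1 hB0 hBrec'
  have hBne := BneZero haa hbb hB1 hB0 hBrec'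
  have hud := solDecomp hA1 hA0 hArec' hB1 hB0 hBrec' u (normRec u hu)
  -- key formula
  have hukey : ∀ n : ℤ, 0 ≤ n → u n = u (-1) * B n * (u 0 / u (-1) + A n / B n) := by
    intro n hn
    rw [hud n (by omega)]
    have hBn := hBne n hn
    field_simp
  -- even/odd subsequences
  have h2k : Tendsto (fun k : ℕ => A ((2 * k : ℕ) : ℤ) / B ((2 * k : ℕ) : ℤ)) atTop (nhds μ) :=
    hconv.comp (tendsto_atTop_atTop.mpr fun m => ⟨m, fun a ha => by omega⟩)
  have h2k1 : Tendsto (fun k : ℕ => A ((2 * k + 1 : ℕ) : ℤ) / B ((2 * k + 1 : ℕ) : ℤ)) atTop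
      (nhds μ) :=
    hconv.comp (tendsto_atTop_atTop.mpr fun m => ⟨m, fun a ha => by omega⟩)
  have hdec : ∀ k : ℕ, A ((2 * (k + 1) : ℕ) : ℤ) / B ((2 * (k + 1) : ℕ) : ℤ) <
      A ((2 * k : ℕ) : ℤ) / B ((2 * k : ℕ) : ℤ) := by
    intro k
    have h := (fStep haa hbb hA1 hA0 hArec' hB1 hB0 hBrec' (2 * (k : ℤ) + 1) (by omega)).2
      ⟨(k : ℤ), by ring⟩
    have e1 : 2 * (k : ℤ) + 1 + 1 = ((2 * (k + 1) : ℕ) : ℤ) := by push_cast; ring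
    have e2 : 2 * (k : ℤ) + 1 - 1 = ((2 * k : ℕ) : ℤ) := by push_cast; ring
    rw [e1, e2] at h
    exact h
  have hinc : ∀ k : ℕ, A ((2 * k + 1 : ℕ) : ℤ) / B ((2 * k + 1 : ℕ) : ℤ) <
      A ((2 * (k + 1) + 1 : ℕ) : ℤ) / B ((2 * (k + 1) + 1 : ℕ) : ℤ) := by
    intro k
    have h := (fStep haa hbb hA1 hA0 hArec' hB1 hB0 hBrec' (2 * (k : ℤ) + 2) (by omega)).1
      ⟨(k : ℤ) + 1, by ring⟩
    have e1 : 2 * (k : ℤ) + 2 - 1 = ((2 * k + 1 : ℕ) : ℤ) := by push_cast; ring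
    have e2 : 2 * (k : ℤ) + 2 + 1 = ((2 * (k + 1) + 1 : ℕ) : ℤ) := by push_cast; ring
    rw [e1, e2] at h
    exact h
  have hevenge : ∀ k : ℕ, μ ≤ A ((2 * k : ℕ) : ℤ) / B ((2 * k : ℕ) : ℤ) := by
    intro k
    have anti : ∀ j : ℕ, k ≤ j → A ((2 * j : ℕ) : ℤ) / B ((2 * j : ℕ) : ℤ) ≤
        A ((2 * k : ℕ) : ℤ) / B ((2 * k : ℕ) : ℤ) := by
      intro j hj
      induction j, hj using Nat.le_induction with
      | base => exact le_refl _
      | succ j hj ih => exact le_trans (hdec j).le ih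
    exact le_of_tendsto h2k (by filter_upwards [eventually_ge_atTop k] with j hj using anti j hj)
  have hoddle : ∀ k : ℕ, A ((2 * k + 1 : ℕ) : ℤ) / B ((2 * k + 1 : ℕ) : ℤ) ≤ μ := by
    intro k
    have mono : ∀ j : ℕ, k ≤ j → A ((2 * k + 1 : ℕ) : ℤ) / B ((2 * k + 1 : ℕ) : ℤ) ≤
        A ((2 * j + 1 : ℕ) : ℤ) / B ((2 * j + 1 : ℕ) : ℤ) := by
      intro j hj
      induction j, hj using Nat.le_induction with
      | base => exact le_refl _
      | succ j hj ih => exact le_trans ih (hinc j).le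
    exact ge_of_tendsto h2k1 (by filter_upwards [eventually_ge_atTop k] with j hj using mono j hj)
  have hevengt : ∀ k : ℕ, μ < A ((2 * k : ℕ) : ℤ) / B ((2 * k : ℕ) : ℤ) :=
    fun k => lt_of_le_of_lt (hevenge (k + 1)) (hdec k)
  have hoddlt : ∀ k : ℕ, A ((2 * k + 1 : ℕ) : ℤ) / B ((2 * k + 1 : ℕ) : ℤ) < μ :=
    fun k => lt_of_lt_of_le (hinc k) (hoddle (k + 1))
  -- integer-indexed strict bounds
  have hfgt : ∀ n : ℤ, 0 ≤ n → Even n → μ < A n / B n := by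
    intro n hn he
    obtain ⟨r, hr⟩ := he
    have hk : n = ((2 * r.toNat : ℕ) : ℤ) := by push_cast; omega
    rw [hk]; exact hevengt r.toNat
  have hflt : ∀ n : ℤ, 1 ≤ n → Odd n → A n / B n < μ := by
    intro n hn ho
    obtain ⟨r, hr⟩ := ho
    have hk : n = ((2 * r.toNat + 1 : ℕ) : ℤ) := by push_cast; omega
    rw [hk]; exact hoddlt r.toNat
  have hfne : ∀ n : ℤ, 1 ≤ n → A n / B n - μ ≠ 0 := by
    intro n hn
    rcases Int.even_or_odd n with h | h
    · exact sub_ne_zero.mpr (hfgt n (by omega) h).ne'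
    · exact sub_ne_zero.mpr (hflt n hn h).ne
  -- (1) → (3)
  have h13 : (∀ n : ℤ, -1 ≤ n → 0 ≤ u n) → -(u 0 / u (-1)) = μ := by
    intro hpos
    have hxge : -μ ≤ u 0 / u (-1) := by
      refine le_of_tendsto h2k.neg ?_
      filter_upwards with k
      have hpk := hpos ((2 * k : ℕ) : ℤ) (by omega)
      have hB := (hBs ((2 * k : ℕ) : ℤ) (by omega)).1 ⟨(k : ℤ), by push_cast; ring⟩
      rw [hukey ((2 * k : ℕ) : ℤ) (by omega)] at hpk
      nlinarith [mul_pos hum1 hB]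
    have hxle : u 0 / u (-1) ≤ -μ := by
      refine ge_of_tendsto h2k1.neg ?_
      filter_upwards with k
      have hpk := hpos ((2 * k + 1 : ℕ) : ℤ) (by omega)
      have hB := (hBs ((2 * k + 1 : ℕ) : ℤ) (by omega)).2 ⟨(k : ℤ), by push_cast; ring⟩
      rw [hukey ((2 * k + 1 : ℕ) : ℤ) (by omega)] at hpk
      nlinarith [mul_neg_of_pos_of_neg hum1 hB]
    linarith
  -- (3) → (1)
  have h31 : -(u 0 / u (-1)) = μ → ∀ n : ℤ, -1 ≤ n → 0 ≤ u n := by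
    intro h3 n hn
    rcases lt_or_ge n 0 with h | h
    · have : n = -1 := by omega
      rw [this]; exact hum1.le
    · rw [hukey n h]
      have hx : u 0 / u (-1) = -μ := by linarith
      rcases Int.even_or_odd n with he | ho
      · have hB := (hBs n h).1 he
        have hf := hfgt n h he
        nlinarith [mul_pos hum1 hB]
      · have hn1 : (1 : ℤ) ≤ n := by
          rcases ho with ⟨r, hr⟩; omega
        have hB := (hBs n h).2 ho
        have hf := hflt n hn1 ho
        nlinarith [mul_neg_of_pos_of_neg hum1 hB]
  -- (3) → (2)
  have h32 : -(u 0 / u (-1)) = μ →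
      IsMinimal (fun n => α1 * (n : ℝ) + α0) (fun n => β1 * (n : ℝ) + β0)
        (fun n => γ1 * (n : ℝ) + γ0) u := by
    intro h3
    refine ⟨hu, ⟨0, by norm_num, hu0.ne'⟩, B, ?_, ?_, ?_⟩
    · intro n hn
      have h3' := (hsig n (by omega)).1
      simp only
      rw [hBrec n hn]
      field_simp
    · intro c d hcd
      have h1 := hcd (-1) (by norm_num)
      have h2 := hcd 0 (by norm_num)
      rw [hB1] at h1
      rw [hB0] at h2
      have hc : c = 0 := by
        rcases mul_eq_zero.mp (by linarith : c * u (-1) = 0) with h | h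
        · exact h
        · exact absurd h hum1.ne'
      exact ⟨hc, by rw [hc] at h2; linarith⟩
    · have heq : (fun k : ℕ => u (k : ℤ) / B (k : ℤ)) =ᶠ[atTop]
          fun k : ℕ => u (-1) * (u 0 / u (-1) + A (k : ℤ) / B (k : ℤ)) := by
        filter_upwards with k
        have hB := hBne (k : ℤ) (by omega)
        rw [hukey (k : ℤ) (by omega)]
        field_simp
      have hx : u 0 / u (-1) = -μ := by linarith
      have hT : Tendsto (fun k : ℕ => u (-1) * (u 0 / u (-1) + A (k : ℤ) / B (k : ℤ))) atTop
          (nhds (u (-1) * (u 0 / u (-1) + μ))) := (tendsto_const_nhds.add hconv).const_mul _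
      have h0 : u (-1) * (u 0 / u (-1) + μ) = 0 := by rw [hx]; ring
      rw [h0] at hT
      exact Tendsto.congr' heq.symm hT
  -- (2) → (3)
  have h23 : IsMinimal (fun n => α1 * (n : ℝ) + α0) (fun n => β1 * (n : ℝ) + β0)
      (fun n => γ1 * (n : ℝ) + γ0) u → -(u 0 / u (-1)) = μ := by
    rintro ⟨-, -, v, hvsol, hindep, htend⟩
    by_contra hne
    have hvd := solDecomp hA1 hA0 hArec' hB1 hB0 hBrec' v (normRec v hvsol)
    have hxμ : u 0 / u (-1) + μ ≠ 0 := fun h => hne (by linarith)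
    by_cases hL : v 0 + v (-1) * μ = 0
    · by_cases hv1 : v (-1) = 0
      · have hv0 : v 0 = 0 := by rw [hv1] at hL; linarith
        have := hindep 0 1 (by
          intro n hn
          rw [hvd n hn, hv0, hv1]
          ring)
        exact one_ne_zero this.2
      · -- blow-up
        have hvkey : ∀ k : ℕ, v (k : ℤ) = v (-1) * B (k : ℤ) * (A (k : ℤ) / B (k : ℤ) - μ) := by
          intro k
          rw [hvd (k : ℤ) (by omega)]
          have hB := hBne (k : ℤ) (by omega)
          have hv0 : v 0 = -(v (-1) * μ) := by linarith
          rw [hv0]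
          field_simp
          ring
        set C := |u (-1)| / |v (-1)| with hCd
        have hC : 0 < C := div_pos (abs_pos.mpr hum1.ne') (abs_pos.mpr hv1)
        set c := |u 0 / u (-1) + μ| / 2 with hcd
        have hcpos : 0 < c := half_pos (abs_pos.mpr hxμ)
        have E1 : ∀ᶠ k : ℕ in atTop, c < |u 0 / u (-1) + A (k : ℤ) / B (k : ℤ)| := by
          have hT : Tendsto (fun k : ℕ => |u 0 / u (-1) + A (k : ℤ) / B (k : ℤ)|) atTop
              (nhds (|u 0 / u (-1) + μ|)) := (tendsto_const_nhds.add hconv).abs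
          exact hT.eventually (eventually_gt_nhds (by rw [hcd]; linarith [abs_pos.mpr hxμ]))
        have E2 : ∀ᶠ k : ℕ in atTop, |A (k : ℤ) / B (k : ℤ) - μ| < C * c := by
          have hT : Tendsto (fun k : ℕ => |A (k : ℤ) / B (k : ℤ) - μ|) atTop (nhds 0) := by
            simpa using (hconv.sub_const μ).abs
          exact hT.eventually (eventually_lt_nhds (by positivity))
        have E3 : ∀ᶠ k : ℕ in atTop, |u (k : ℤ) / v (k : ℤ)| < 1 := by
          have hT : Tendsto (fun k : ℕ => |u (k : ℤ) / v (k : ℤ)|) atTop (nhds 0) := by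
            simpa using htend.abs
          exact hT.eventually (eventually_lt_nhds one_pos)
        obtain ⟨k, h1, h2, h3', hk1⟩ := (E1.and (E2.and (E3.and (eventually_ge_atTop 1)))).exists
        have hfnek : A (k : ℤ) / B (k : ℤ) - μ ≠ 0 := hfne (k : ℤ) (by omega)
        have hBk := hBne (k : ℤ) (by omega)
        have huv : u (k : ℤ) / v (k : ℤ) = (u (-1) / v (-1)) *
            ((u 0 / u (-1) + A (k : ℤ) / B (k : ℤ)) / (A (k : ℤ) / B (k : ℤ) - μ)) := by
          rw [hukey (k : ℤ) (by omega), hvkey k]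
          rw [mul_div_mul_comm, mul_div_mul_comm]
          rw [div_self hBk, mul_one]
        have habs : |u (k : ℤ) / v (k : ℤ)| = C *
            (|u 0 / u (-1) + A (k : ℤ) / B (k : ℤ)| / |A (k : ℤ) / B (k : ℤ) - μ|) := by
          rw [huv, abs_mul, abs_div, abs_div, hCd]
        have h4 : 0 < |A (k : ℤ) / B (k : ℤ) - μ| := abs_pos.mpr hfnek
        have h5 : |A (k : ℤ) / B (k : ℤ) - μ| < C * |u 0 / u (-1) + A (k : ℤ) / B (k : ℤ)| :=
          lt_trans h2 (by nlinarith)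
        have h6 : 1 < C * (|u 0 / u (-1) + A (k : ℤ) / B (k : ℤ)| / |A (k : ℤ) / B (k : ℤ) - μ|) := by
          rw [← mul_div_assoc]
          exact (one_lt_div h4).mpr h5
        rw [habs] at h3'
        linarith
    · -- L ≠ 0
      have hvB : Tendsto (fun k : ℕ => v (k : ℤ) / B (k : ℤ)) atTop
          (nhds (v 0 + v (-1) * μ)) := by
        have heq : (fun k : ℕ => v (k : ℤ) / B (k : ℤ)) =ᶠ[atTop]
            fun k : ℕ => v 0 + v (-1) * (A (k : ℤ) / B (k : ℤ)) := by
          filter_upwards with k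
          have hB := hBne (k : ℤ) (by omega)
          rw [hvd (k : ℤ) (by omega)]
          field_simp
        exact Tendsto.congr' heq.symm (tendsto_const_nhds.add (hconv.const_mul _))
      have huB : Tendsto (fun k : ℕ => u (k : ℤ) / B (k : ℤ)) atTop
          (nhds (u (-1) * (u 0 / u (-1) + μ))) := by
        have heq : (fun k : ℕ => u (k : ℤ) / B (k : ℤ)) =ᶠ[atTop]
            fun k : ℕ => u (-1) * (u 0 / u (-1) + A (k : ℤ) / B (k : ℤ)) := by
          filter_upwards with k
          have hB := hBne (k : ℤ) (by omega)
          rw [hukey (k : ℤ) (by omega)]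
          field_simp
        exact Tendsto.congr' heq.symm ((tendsto_const_nhds.add hconv).const_mul _)
      have hne2 : ∀ᶠ k : ℕ in atTop, v (k : ℤ) / B (k : ℤ) ≠ 0 := hvB.eventually_ne hL
      have heq2 : (fun k : ℕ => u (k : ℤ) / v (k : ℤ)) =ᶠ[atTop]
          fun k : ℕ => (u (k : ℤ) / B (k : ℤ)) / (v (k : ℤ) / B (k : ℤ)) := by
        filter_upwards [hne2] with k hk
        have hB := hBne (k : ℤ) (by omega)
        have hv : v (k : ℤ) ≠ 0 := fun h0 => hk (by rw [h0]; simp)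
        field_simp [hv, hB]
      have hlim : Tendsto (fun k : ℕ => u (k : ℤ) / v (k : ℤ)) atTop
          (nhds ((u (-1) * (u 0 / u (-1) + μ)) / (v 0 + v (-1) * μ))) :=
        Tendsto.congr' heq2.symm (huB.div hvB hL)
      have h0 := tendsto_nhds_unique htend hlim
      exact div_ne_zero (mul_ne_zero hum1.ne' hxμ) hL h0.symm
  exact ⟨⟨fun h => h32 (h13 h), fun h => h31 (h23 h)⟩, h23, h32⟩
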